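/- (Correctness of the reduction underlying Theorem 2.) Let (u_α, v_α)_{α∈[d]} be a Post correspondence instance over a finite alphabet Σ of size b ≥ 1, let λ ∈ ℚ, and let A^{(1)},…,A^{(d)} ∈ ℕ^{6×6}, L = e₆, R = e₁ − e₂ + e₃ − (λ+1)e₆ be the encoding matrices and boundary vectors of Lemma 1. Define the MPO tensor M by M^{(α,β)} := δ_{α,β} A^{(α)}. Then the following are equivalent: (i) there exists a system size n ≥ 1 such that ρ(L,M,R,n) + λ𝟙 is not positive semidefinite; (ii) the Post correspondence instance has a solution, i.e., there exists a nonempty word w ∈ [d]* with U(w) = V(w). -/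
import Mathlib


/-- The numeric representation `σ : Σ* → ℕ` associated with an enumeration
bijection `e : Σ ≃ Fin b` (so that `σ₀(a) = e(a) + 1 ∈ {1,…,b}`):
`σ(w) = Σ_{j=1}^{|w|} σ₀(w_j) · b^{|w|−j}`, with `σ(∅) = 0`. -/
def numRep {S : Type*} (b : ℕ) (e : S ≃ Fin b) (w : List S) : ℕ :=
  ∑ j : Fin w.length, ((e (w.get j) : ℕ) + 1) * b ^ (w.length - 1 - (j : ℕ))

/-- The 6×6 integer encoding matrix `A(u,v)` built from the numeric representation `σ`. -/
def encMat {S : Type*} (b : ℕ) (e : S ≃ Fin b) (u v : List S) :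
    Matrix (Fin 6) (Fin 6) ℤ :=
  !![(b : ℤ) ^ (2 * u.length), 0, 0, 0, 0, 0;
     0, (b : ℤ) ^ (u.length + v.length), 0, 0, 0, 0;
     0, 0, (b : ℤ) ^ (2 * v.length), 0, 0, 0;
     (numRep b e u : ℤ) * (b : ℤ) ^ u.length, (numRep b e v : ℤ) * (b : ℤ) ^ u.length, 0,
       (b : ℤ) ^ u.length, 0, 0;
     0, (numRep b e u : ℤ) * (b : ℤ) ^ v.length, (numRep b e v : ℤ) * (b : ℤ) ^ v.length, 0,
       (b : ℤ) ^ v.length, 0;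
     (numRep b e u : ℤ) ^ 2, 2 * (numRep b e u : ℤ) * (numRep b e v : ℤ), (numRep b e v : ℤ) ^ 2,
       2 * (numRep b e u : ℤ), 2 * (numRep b e v : ℤ), 1]

/-- The rational 6×6 encoding matrices `A^{(α)} = A(u_α, v_α)` of a PCP instance. -/
def encMatQ {S : Type*} (b : ℕ) (e : S ≃ Fin b) {d : ℕ} (u v : Fin d → List S)
    (α : Fin d) : Matrix (Fin 6) (Fin 6) ℚ :=
  (encMat b e (u α) (v α)).map (Int.cast : ℤ → ℚ)

/-- The boundary vector `L = e₆ ∈ ℚ⁶` (sixth standard basis vector). -/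
def bndL : Fin 6 → ℚ := Pi.single 5 1

/-- The boundary vector `R = e₁ − e₂ + e₃ − (λ+1)e₆ ∈ ℚ⁶`. -/
def bndR (lam : ℚ) : Fin 6 → ℚ :=
  (Pi.single 0 1 : Fin 6 → ℚ) - (Pi.single 1 1 : Fin 6 → ℚ)
    + (Pi.single 2 1 : Fin 6 → ℚ) - (lam + 1) • (Pi.single 5 1 : Fin 6 → ℚ)

/-- The translation-invariant matrix product operator `ρ(L,M,R,n)` on `(ℚ^d)^{⊗n}`
generated by the MPO tensor `M = (M^{(α,β)}_{i,j})` and boundary vectors `L, R ∈ ℚ^D`: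
`ρ(L,M,R,n) = Σ_{j ∈ [D]^{n+1}} L_{j₁} M_{j₁,j₂} ⊗ ⋯ ⊗ M_{j_n,j_{n+1}} R_{j_{n+1}}`,
written entrywise in the standard tensor-product basis of `(ℚ^d)^{⊗n}`. -/
def mpo {d D : ℕ} (L R : Fin D → ℚ) (M : Fin d → Fin d → Matrix (Fin D) (Fin D) ℚ)
    (n : ℕ) : Matrix (Fin n → Fin d) (Fin n → Fin d) ℚ :=
  fun a c => ∑ j : Fin (n + 1) → Fin D,
    L (j 0) * (∏ t : Fin n, M (a t) (c t) (j t.castSucc) (j t.succ)) * R (j (Fin.last n))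

/-- The diagonal MPO tensor `M^{(α,β)} = δ_{α,β} A^{(α)}` built from the encoding
matrices of a PCP instance. -/
def pcpTensor {S : Type*} (b : ℕ) (e : S ≃ Fin b) {d : ℕ} (u v : Fin d → List S)
    (α β : Fin d) : Matrix (Fin 6) (Fin 6) ℚ :=
  if α = β then encMatQ b e u v α else 0

/-! ### Auxiliary lemmas -/

@[simp]
lemma matrix_cons_val_five {α : Type*} {m : ℕ} (x : α)
    (u : Fin m.succ.succ.succ.succ.succ → α) :
    Matrix.vecCons x u 5
      = Matrix.vecHead (Matrix.vecTail (Matrix.vecTail (Matrix.vecTail (Matrix.vecTail u)))) :=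
  rfl

section NumRep

variable {S : Type*} {b : ℕ} (e : S ≃ Fin b)

/-- Horner-form version of the numeric representation. -/
def nrep (e : S ≃ Fin b) (w : List S) : ℕ :=
  w.foldl (fun n a => n * b + ((e a : ℕ) + 1)) 0

lemma nrep_nil : nrep e ([] : List S) = 0 := rfl

lemma nrep_foldl (w : List S) (m : ℕ) :
    w.foldl (fun n a => n * b + ((e a : ℕ) + 1)) m = m * b ^ w.length + nrep e w := by
  induction w generalizing m with
  | nil => simp [nrep_nil]
  | cons a w ih =>
    show List.foldl _ (m * b + ((e a : ℕ) + 1)) w = _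
    rw [ih]
    have : nrep e (a :: w) = (0 * b + ((e a : ℕ) + 1)) * b ^ w.length + nrep e w := by
      show List.foldl _ _ w = _
      rw [ih]
    rw [this]
    simp [List.length_cons, pow_succ]
    ring

lemma nrep_cons (a : S) (w : List S) :
    nrep e (a :: w) = ((e a : ℕ) + 1) * b ^ w.length + nrep e w := by
  show List.foldl _ (0 * b + ((e a : ℕ) + 1)) w = _
  rw [nrep_foldl]
  ring_nf

lemma numRep_cons (a : S) (w : List S) :
    numRep b e (a :: w) = ((e a : ℕ) + 1) * b ^ w.length + numRep b e w := by
  show (∑ j : Fin (w.length + 1), ((e ((a :: w).get j) : ℕ) + 1) * b ^ (w.length + 1 - 1 - (j : ℕ)))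
      = _
  rw [Fin.sum_univ_succ]
  congr 1
  unfold numRep
  apply Finset.sum_congr rfl
  intro j _
  have hj : (j : ℕ) < w.length := j.isLt
  simp only [List.get_cons_succ, Fin.val_succ]
  congr 2
  omega

lemma numRep_eq_nrep (w : List S) : numRep b e w = nrep e w := by
  induction w with
  | nil => simp [numRep, nrep_nil]
  | cons a w ih => rw [numRep_cons, nrep_cons, ih]

lemma nrep_append (w w' : List S) :
    nrep e (w ++ w') = nrep e w * b ^ w'.length + nrep e w' := by
  rw [nrep, List.foldl_append, nrep_foldl]
  rfl

lemma numRep_append (w w' : List S) :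
    numRep b e (w ++ w') = numRep b e w * b ^ w'.length + numRep b e w' := by
  simp [numRep_eq_nrep, nrep_append]

lemma nrep_pos (a : S) (w : List S) : 1 ≤ nrep e (a :: w) := by
  rw [nrep_cons]
  have hb : 0 < b := (e a).pos
  have : 1 ≤ b ^ w.length := Nat.one_le_pow _ _ hb
  nlinarith

lemma nrep_concat (w : List S) (a : S) :
    nrep e (w ++ [a]) = nrep e w * b + ((e a : ℕ) + 1) := by
  rw [nrep_append, nrep_cons, nrep_nil]
  simp

lemma numRep_injective : Function.Injective (numRep b e) := by
  intro w₁
  induction w₁ using List.reverseRecOn with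
  | nil =>
    intro w₂ h
    cases w₂ with
    | nil => rfl
    | cons a w =>
      exfalso
      have := nrep_pos e a w
      rw [numRep_eq_nrep, numRep_eq_nrep, nrep_nil] at h
      omega
  | append_singleton w a ih =>
    intro w₂ h
    rw [numRep_eq_nrep, numRep_eq_nrep] at h
    rcases w₂.eq_nil_or_concat with rfl | ⟨w', a', rfl⟩
    · exfalso
      rw [nrep_concat, nrep_nil] at h
      omega
    · simp only [List.concat_eq_append] at h ⊢
      rw [nrep_concat, nrep_concat] at h
      have hb : 0 < b := (e a).pos
      have hd : (e a : ℕ) < b := (e a).isLt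
      have hd' : (e a' : ℕ) < b := (e a').isLt
      have key : ∀ (x dx : ℕ), dx < b → (x * b + (dx + 1) - 1) / b = x := by
        intro x dx hdx
        have h' : x * b + (dx + 1) - 1 = dx + x * b := by omega
        rw [h', Nat.add_mul_div_right _ _ hb, Nat.div_eq_of_lt hdx, Nat.zero_add]
      have hx : nrep e w = nrep e w' := by
        have k1 := key (nrep e w) (e a) hd
        have k2 := key (nrep e w') (e a') hd'
        rw [h] at k1
        omega
      have ha : a = a' := by
        rw [hx] at h
        have : (e a : ℕ) = (e a' : ℕ) := by omega
        exact e.injective (Fin.val_injective this)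
      have := ih (show numRep b e w = numRep b e w' by
        rw [numRep_eq_nrep, numRep_eq_nrep, hx])
      rw [this, ha]

lemma numRep_nil : numRep b e ([] : List S) = 0 := by simp [numRep]

end NumRep

section EncMat

variable {S : Type*} {b : ℕ} (e : S ≃ Fin b)

lemma encMat_nil : encMat b e ([] : List S) ([] : List S) = 1 := by
  ext i j
  fin_cases i <;> fin_cases j <;>
    simp [encMat, numRep_nil, Matrix.one_apply, Matrix.vecHead, Matrix.vecTail]

set_option maxHeartbeats 2000000 in
lemma encMat_mul (u v u' v' : List S) :
    encMat b e u v * encMat b e u' v' = encMat b e (u ++ u') (v ++ v') := by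
  have hu : (numRep b e (u ++ u') : ℤ) = numRep b e u * (b : ℤ) ^ u'.length + numRep b e u' := by
    rw [numRep_append]; push_cast; ring
  have hv : (numRep b e (v ++ v') : ℤ) = numRep b e v * (b : ℤ) ^ v'.length + numRep b e v' := by
    rw [numRep_append]; push_cast; ring
  ext i j
  fin_cases i <;> fin_cases j <;>
    (simp [encMat, Matrix.mul_apply, Fin.sum_univ_six, hu, hv, List.length_append,
      Matrix.vecHead, Matrix.vecTail] <;> ring)

lemma matrix_map_mul_int (A B : Matrix (Fin 6) (Fin 6) ℤ) :
    (A * B).map (Int.cast : ℤ → ℚ) = A.map Int.cast * B.map Int.cast := by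
  ext i j
  simp [Matrix.mul_apply, Matrix.map_apply]

lemma prod_encMatQ {d : ℕ} (u v : Fin d → List S) (w : List (Fin d)) :
    (w.map (encMatQ b e u v)).prod
      = (encMat b e ((w.map u).flatten) ((w.map v).flatten)).map (Int.cast : ℤ → ℚ) := by
  induction w with
  | nil =>
    simp only [List.map_nil, List.prod_nil, List.flatten_nil]
    rw [encMat_nil]
    exact (Matrix.map_one _ Int.cast_zero Int.cast_one).symm
  | cons α w ih =>
    simp only [List.map_cons, List.prod_cons, List.flatten_cons]
    rw [ih, encMatQ, ← matrix_map_mul_int, encMat_mul]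

end EncMat

open Matrix in
lemma pathSum {D : ℕ} : ∀ (n : ℕ) (Ms : Fin n → Matrix (Fin D) (Fin D) ℚ) (f g : Fin D → ℚ),
    (∑ j : Fin (n + 1) → Fin D,
      f (j 0) * (∏ t : Fin n, Ms t (j t.castSucc) (j t.succ)) * g (j (Fin.last n)))
      = f ⬝ᵥ ((List.ofFn Ms).prod *ᵥ g)
  | 0, Ms, f, g => by
    rw [← (Equiv.funUnique (Fin 1) (Fin D)).symm.sum_comp]
    simp [dotProduct, Fin.last]
  | (n + 1), Ms, f, g => by
    rw [← (Fin.consEquiv (fun _ : Fin (n + 2) => Fin D)).sum_comp]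
    simp only [Fin.consEquiv_apply]
    rw [Fintype.sum_prod_type]
    have key : ∀ (k : Fin D) (j' : Fin (n + 1) → Fin D),
        f ((Fin.cons k j' : Fin (n + 2) → Fin D) 0)
          * (∏ t : Fin (n + 1), Ms t ((Fin.cons k j' : Fin (n + 2) → Fin D) t.castSucc)
              ((Fin.cons k j' : Fin (n + 2) → Fin D) t.succ))
          * g ((Fin.cons k j' : Fin (n + 2) → Fin D) (Fin.last (n + 1)))
        = f k * (Ms 0 k (j' 0) * (∏ t : Fin n, (fun t => Ms t.succ) t (j' t.castSucc) (j' t.succ))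
            * g (j' (Fin.last n))) := by
      intro k j'
      rw [Fin.prod_univ_succ]
      simp only [Fin.cons_zero, Fin.castSucc_zero, ← Fin.succ_castSucc, ← Fin.succ_last,
        Fin.cons_succ]
      ring
    rw [Finset.sum_congr rfl (fun k _ => Finset.sum_congr rfl (fun j' _ => key k j'))]
    have ih := pathSum n (fun t => Ms t.succ)
    simp only [← Finset.mul_sum]
    rw [Finset.sum_congr rfl (fun k _ => by rw [ih (fun l => Ms 0 k l) g])]
    rw [List.ofFn_succ, List.prod_cons, ← Matrix.mulVec_mulVec]
    simp [dotProduct, Matrix.mulVec]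

open Matrix in
lemma boundary_eval {S : Type*} {b : ℕ} (e : S ≃ Fin b) (lam : ℚ) (U V : List S) :
    bndL ⬝ᵥ ((encMat b e U V).map (Int.cast : ℤ → ℚ) *ᵥ bndR lam)
      = ((numRep b e U : ℚ) - (numRep b e V : ℚ)) ^ 2 - (lam + 1) := by
  simp [bndL, bndR, encMat, Matrix.mulVec, dotProduct, Fin.sum_univ_six, Matrix.map_apply,
    Pi.single_apply, Matrix.vecHead, Matrix.vecTail]
  ring

open Matrix in
lemma mpo_apply_diag {S : Type*} {b d : ℕ} (e : S ≃ Fin b) (u v : Fin d → List S) (lam : ℚ)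
    (n : ℕ) (a c : Fin n → Fin d) :
    mpo bndL (bndR lam) (pcpTensor b e u v) n a c
      = if a = c then
          (((numRep b e (((List.ofFn a).map u).flatten) : ℚ)
            - (numRep b e (((List.ofFn a).map v).flatten) : ℚ)) ^ 2 - (lam + 1))
        else 0 := by
  rcases eq_or_ne a c with rfl | hne
  · rw [if_pos rfl]
    show (∑ j : Fin (n + 1) → Fin 6,
      bndL (j 0) * (∏ t : Fin n, pcpTensor b e u v (a t) (a t) (j t.castSucc) (j t.succ))
        * bndR lam (j (Fin.last n))) = _
    rw [pathSum n (fun t => pcpTensor b e u v (a t) (a t)) bndL (bndR lam)]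
    have hlist : (List.ofFn fun t => pcpTensor b e u v (a t) (a t))
        = ((List.ofFn a).map (encMatQ b e u v)) := by
      rw [List.map_ofFn]
      congr 1
      funext t
      simp [pcpTensor, Function.comp]
    rw [hlist, prod_encMatQ, boundary_eval]
  · rw [if_neg hne]
    show (∑ j : Fin (n + 1) → Fin 6,
      bndL (j 0) * (∏ t : Fin n, pcpTensor b e u v (a t) (c t) (j t.castSucc) (j t.succ))
        * bndR lam (j (Fin.last n))) = 0
    rw [pathSum n (fun t => pcpTensor b e u v (a t) (c t)) bndL (bndR lam)]
    obtain ⟨t0, ht0⟩ := Function.ne_iff.mp hne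
    have hmem : (0 : Matrix (Fin 6) (Fin 6) ℚ)
        ∈ List.ofFn (fun t => pcpTensor b e u v (a t) (c t)) := by
      rw [List.mem_ofFn]
      exact ⟨t0, by simp [pcpTensor, ht0]⟩
    rw [List.prod_eq_zero hmem]
    simp

open Matrix in
/-- Correctness of the reduction underlying Theorem 2: for the MPO built from the
Lemma-1 encoding of a PCP instance `(u_α, v_α)_{α∈[d]}` and threshold `λ ∈ ℚ`,
the following are equivalent: (i) there exists a system size `n ≥ 1` such that
`ρ(L,M,R,n) + λ𝟙` is not positive semidefinite; (ii) the PCP instance has a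
solution, i.e., a nonempty word `w ∈ [d]*` with `U(w) = V(w)`. -/
theorem reduction_correct_unbounded {S : Type*} {b d : ℕ} (hb : 1 ≤ b) (e : S ≃ Fin b)
    (u v : Fin d → List S) (lam : ℚ) :
    (∃ n : ℕ, 1 ≤ n ∧
        ¬ ∀ x : (Fin n → Fin d) → ℚ,
            0 ≤ x ⬝ᵥ ((mpo bndL (bndR lam) (pcpTensor b e u v) n + lam • 1).mulVec x))
      ↔ ∃ w : List (Fin d), w ≠ [] ∧ (w.map u).flatten = (w.map v).flatten := by
  -- diagonal entries of the shifted MPO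
  have Tapp : ∀ (n : ℕ) (a c : Fin n → Fin d),
      (mpo bndL (bndR lam) (pcpTensor b e u v) n + lam • 1) a c
        = if a = c then
            (((numRep b e (((List.ofFn a).map u).flatten) : ℚ)
              - (numRep b e (((List.ofFn a).map v).flatten) : ℚ)) ^ 2 - 1)
          else 0 := by
    intro n a c
    rw [Matrix.add_apply, mpo_apply_diag]
    rcases eq_or_ne a c with rfl | hne
    · simp [Matrix.one_apply]
      ring
    · simp [Matrix.one_apply, hne]
  -- the quadratic form of the shifted MPO
  have quad : ∀ (n : ℕ) (x : (Fin n → Fin d) → ℚ),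
      x ⬝ᵥ ((mpo bndL (bndR lam) (pcpTensor b e u v) n + lam • 1).mulVec x)
        = ∑ a : Fin n → Fin d,
            (((numRep b e (((List.ofFn a).map u).flatten) : ℚ)
              - (numRep b e (((List.ofFn a).map v).flatten) : ℚ)) ^ 2 - 1) * (x a * x a) := by
    intro n x
    rw [dotProduct]
    apply Finset.sum_congr rfl
    intro a _
    rw [Matrix.mulVec, dotProduct]
    rw [Finset.sum_congr rfl (fun c _ => by rw [Tapp n a c])]
    simp only [ite_mul, zero_mul]
    rw [Finset.sum_ite_eq]
    simp
    ring
  constructor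
  · rintro ⟨n, hn, hx⟩
    by_contra hno
    push_neg at hno
    apply hx
    intro x
    rw [quad]
    apply Finset.sum_nonneg
    intro a _
    have key : numRep b e (((List.ofFn a).map u).flatten)
        ≠ numRep b e (((List.ofFn a).map v).flatten) := by
      intro hEq
      have hUV := numRep_injective e hEq
      have hne : List.ofFn a ≠ [] := by
        intro h0
        have := congrArg List.length h0
        simp at this
        omega
      exact hno (List.ofFn a) hne hUV
    have hsq : (1 : ℚ) ≤ ((numRep b e (((List.ofFn a).map u).flatten) : ℚ)
        - (numRep b e (((List.ofFn a).map v).flatten) : ℚ)) ^ 2 := by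
      set p := numRep b e (((List.ofFn a).map u).flatten)
      set q := numRep b e (((List.ofFn a).map v).flatten)
      have hz : ((p : ℤ) - q) ≠ 0 := by
        intro h
        exact key (by omega)
      have h1 : (1 : ℤ) ≤ ((p : ℤ) - q) ^ 2 := by
        nlinarith [Int.one_le_abs hz, sq_abs ((p : ℤ) - q), abs_nonneg ((p : ℤ) - q)]
      have : (1 : ℚ) ≤ (((p : ℤ) - q : ℤ) : ℚ) ^ 2 := by exact_mod_cast h1
      push_cast at this
      convert this using 2
    have : 0 ≤ x a * x a := mul_self_nonneg _
    nlinarith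
  · rintro ⟨w, hw, hsol⟩
    refine ⟨w.length, ?_, ?_⟩
    · have := List.length_pos_iff.mpr hw
      omega
    · intro hall
      set a0 : Fin w.length → Fin d := w.get with ha0
      have hofn : List.ofFn a0 = w := List.ofFn_get w
      have := hall (Pi.single a0 (1 : ℚ))
      rw [quad] at this
      have hsum : ∑ a : Fin w.length → Fin d,
          (((numRep b e (((List.ofFn a).map u).flatten) : ℚ)
            - (numRep b e (((List.ofFn a).map v).flatten) : ℚ)) ^ 2 - 1)
              * ((Pi.single a0 (1 : ℚ) : (Fin w.length → Fin d) → ℚ) a * (Pi.single a0 (1 : ℚ) : (Fin w.length → Fin d) → ℚ) a)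
          = (((numRep b e (((List.ofFn a0).map u).flatten) : ℚ)
            - (numRep b e (((List.ofFn a0).map v).flatten) : ℚ)) ^ 2 - 1) := by
        rw [Finset.sum_eq_single a0]
        · simp
        · intro a _ hne
          simp [Pi.single_eq_of_ne hne]
        · simp
      rw [hsum, hofn, hsol] at this
      simp at this
      linarith
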